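/- Let -1 < μ < 0 be real, and let a, s, t be integers with s ≥ a + 2 and t ≥ s + 1. Then h_μ(t, s) = H_μ(t, s-1)/H_μ(t, a) is strictly decreasing in t: h_μ(t, s) < h_μ(t-1, s). -/
import Mathlib


noncomputable def H (μ : ℝ) (t a : ℤ) : ℝ :=
  Real.Gamma ((t : ℝ) - a + μ) / (Real.Gamma ((t : ℝ) - a) * Real.Gamma (μ + 1))

theorem h_ratio_decreasing (μ : ℝ) (hμ1 : -1 < μ) (hμ2 : μ < 0) (a s t : ℤ)
    (hs : a + 2 ≤ s) (ht : s + 1 ≤ t) :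
    H μ t (s - 1) / H μ t a < H μ (t - 1) (s - 1) / H μ (t - 1) a := by
  have hxZ : (1 : ℤ) ≤ t - s := by omega
  have hx : (1 : ℝ) ≤ (t : ℝ) - s := by exact_mod_cast hxZ
  have hbx : (t : ℝ) - s + 1 ≤ (t : ℝ) - a - 1 := by
    have : (s : ℝ) ≥ (a : ℝ) + 2 := by exact_mod_cast hs
    linarith
  set x : ℝ := (t : ℝ) - s with hxdef
  set b : ℝ := (t : ℝ) - a - 1 with hbdef
  have hxpos : 0 < x := by linarith
  have hbpos : 0 < b := by linarith
  have hxμ : 0 < x + μ := by linarith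
  have hbμ : 0 < b + μ := by linarith
  have hgx : 0 < Real.Gamma (x + μ) := Real.Gamma_pos_of_pos hxμ
  have hgX : 0 < Real.Gamma x := Real.Gamma_pos_of_pos hxpos
  have hgb : 0 < Real.Gamma (b + μ) := Real.Gamma_pos_of_pos hbμ
  have hgB : 0 < Real.Gamma b := Real.Gamma_pos_of_pos hbpos
  have hgm : 0 < Real.Gamma (μ + 1) := Real.Gamma_pos_of_pos (by linarith)
  have h1 : Real.Gamma (x + μ + 1) = (x + μ) * Real.Gamma (x + μ) :=
    Real.Gamma_add_one (ne_of_gt hxμ)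
  have h2 : Real.Gamma (x + 1) = x * Real.Gamma x :=
    Real.Gamma_add_one (ne_of_gt hxpos)
  have h3 : Real.Gamma (b + μ + 1) = (b + μ) * Real.Gamma (b + μ) :=
    Real.Gamma_add_one (ne_of_gt hbμ)
  have h4 : Real.Gamma (b + 1) = b * Real.Gamma b :=
    Real.Gamma_add_one (ne_of_gt hbpos)
  have e1 : H μ t (s - 1) = (x + μ) * Real.Gamma (x + μ) / (x * Real.Gamma x * Real.Gamma (μ + 1)) := by
    unfold H
    rw [show ((t : ℝ) - ((s - 1 : ℤ) : ℝ) + μ) = x + μ + 1 by push_cast [hxdef]; ring,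
        show ((t : ℝ) - ((s - 1 : ℤ) : ℝ)) = x + 1 by push_cast [hxdef]; ring, h1, h2]
  have e2 : H μ t a = (b + μ) * Real.Gamma (b + μ) / (b * Real.Gamma b * Real.Gamma (μ + 1)) := by
    unfold H
    rw [show ((t : ℝ) - (a : ℝ) + μ) = b + μ + 1 by rw [hbdef]; ring,
        show ((t : ℝ) - (a : ℝ)) = b + 1 by rw [hbdef]; ring, h3, h4]
  have e3 : H μ (t - 1) (s - 1) = Real.Gamma (x + μ) / (Real.Gamma x * Real.Gamma (μ + 1)) := by
    unfold H
    rw [show (((t - 1 : ℤ) : ℝ) - ((s - 1 : ℤ) : ℝ) + μ) = x + μ by push_cast [hxdef]; ring,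
        show (((t - 1 : ℤ) : ℝ) - ((s - 1 : ℤ) : ℝ)) = x by push_cast [hxdef]; ring]
  have e4 : H μ (t - 1) a = Real.Gamma (b + μ) / (Real.Gamma b * Real.Gamma (μ + 1)) := by
    unfold H
    rw [show (((t - 1 : ℤ) : ℝ) - (a : ℝ) + μ) = b + μ by push_cast [hbdef]; ring,
        show (((t - 1 : ℤ) : ℝ) - (a : ℝ)) = b by push_cast [hbdef]; ring]
  rw [e1, e2, e3, e4]
  rw [div_lt_div_iff₀ (by positivity) (by positivity), div_mul_div_comm, div_mul_div_comm,
    div_lt_div_iff₀ (by positivity) (by positivity)]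
  have hfac : (x + μ) * b < x * (b + μ) := by nlinarith
  have hK : 0 < Real.Gamma (x + μ) * Real.Gamma (b + μ) * Real.Gamma x * Real.Gamma b *
      (Real.Gamma (μ + 1) * Real.Gamma (μ + 1)) := by positivity
  nlinarith [mul_lt_mul_of_pos_right hfac hK]
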